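/- Let α > 0. Any Lebesgue-measurable function u : [0,1] → ℝ satisfying u(1-x) + (1-x)^α · u(y/(1-x)) = u(y) + (1-y)^α · u((1-x-y)/(1-y)) for all x, y ∈ [0,1) with x + y ≤ 1 is continuous on the open interval (0,1). -/

import Mathlib

open MeasureTheory Set ENNReal

/-- Preimage measure bound: an injective differentiable map with derivative bounded below
by `δ` cannot compress sets by more than a factor `δ`. -/
lemma preimage_meas_bound {f fd : ℝ → ℝ} (hfm : Measurable f) (hfdm : Measurable fd)
    {S E : Set ℝ} (hS : MeasurableSet S) (hE : MeasurableSet E)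
    (hf' : ∀ x ∈ S, HasDerivWithinAt f (fd x) S x) (hinj : Set.InjOn f S)
    {δ : ℝ} (hδ0 : 0 < δ) (hδ : ∀ x ∈ S, δ ≤ |fd x|) :
    volume (S ∩ f ⁻¹' E) ≤ volume E / ENNReal.ofReal δ := by
  set s := S ∩ f ⁻¹' E with hs_def
  have hs : MeasurableSet s := hS.inter (hfm hE)
  have h1 : ∀ x ∈ s, HasDerivWithinAt f (fd x) s x :=
    fun x hx => (hf' x hx.1).mono inter_subset_left
  have h2 : Set.InjOn f s := hinj.mono inter_subset_left
  have key : ∫⁻ x in s, ENNReal.ofReal |fd x| ≤ volume (f '' s) := by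
    have := lintegral_abs_det_fderiv_le_addHaar_image volume hs
      (fun x hx => (h1 x hx).hasFDerivWithinAt) h2
    simpa only [ContinuousLinearMap.det_toSpanSingleton] using this
  have lower : ENNReal.ofReal δ * volume s ≤ ∫⁻ x in s, ENNReal.ofReal |fd x| := by
    rw [← setLIntegral_const s (ENNReal.ofReal δ)]
    exact setLIntegral_mono (hfdm.abs.ennreal_ofReal) fun x hx =>
      ENNReal.ofReal_le_ofReal (hδ x hx.1)
  have img : volume (f '' s) ≤ volume E :=
    measure_mono (by rintro _ ⟨x, hx, rfl⟩; exact hx.2)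
  rw [ENNReal.le_div_iff_mul_le (Or.inl (by simpa using hδ0)) (Or.inl ENNReal.ofReal_ne_top)]
  calc volume s * ENNReal.ofReal δ = ENNReal.ofReal δ * volume s := mul_comm _ _
    _ ≤ _ := le_trans lower (le_trans key img)


lemma phi_bound (t₀ s : ℝ) (h0 : 0 < t₀) (h1 : t₀ < 1) (hs1 : t₀/2 ≤ s) (hs2 : s ≤ (1+t₀)/2)
    {E : Set ℝ} (hEm : MeasurableSet E) :
    volume (Set.Icc (t₀/8) (t₀/4) ∩ (fun y => (s-y)/(1-y)) ⁻¹' E)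
      ≤ volume E / ENNReal.ofReal ((1-t₀)/2) := by
  have hs0 : 0 < s := by linarith
  have hs1' : s < 1 := by linarith
  have hδm0 : (0:ℝ) < (1-t₀)/2 := by linarith
  refine preimage_meas_bound (fd := fun y => (s-1)/(1-y)^2)
    ((measurable_const.sub measurable_id).div (measurable_const.sub measurable_id))
    (measurable_const.div ((measurable_const.sub measurable_id).pow_const 2))
    measurableSet_Icc hEm ?_ ?_ hδm0 ?_
  · intro y hy
    have hy2 : y ≤ t₀/4 := hy.2
    have hy3 : y < 1 := by linarith
    have hne : (1:ℝ) - y ≠ 0 := ne_of_gt (by linarith)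
    have hda := ((hasDerivAt_id y).const_sub s).div ((hasDerivAt_id y).const_sub 1) hne
    have hda' : HasDerivAt (fun y : ℝ => (s-y)/(1-y)) ((s-1)/(1-y)^2) y := by
      have e : (-1 * (1 - id y) - (s - id y) * -1) / (1 - id y) ^ 2 = (s-1)/(1-y)^2 := by
        simp only [id]; ring
      rw [e] at hda
      exact hda
    exact hda'.hasDerivWithinAt
  · intro y1 hy1m y2 hy2m hEq
    have h11 : y1 < 1 := by have := hy1m.2; linarith
    have h21 : y2 < 1 := by have := hy2m.2; linarith
    have hEq' : (s - y1)/(1-y1) = (s - y2)/(1-y2) := hEq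
    rw [div_eq_div_iff (ne_of_gt (by linarith : (0:ℝ) < 1 - y1))
      (ne_of_gt (by linarith : (0:ℝ) < 1 - y2))] at hEq'
    have h5 : (1-s)*(y1-y2) = 0 := by linear_combination -hEq'
    rcases mul_eq_zero.1 h5 with h|h
    · exact absurd h (ne_of_gt (by linarith))
    · linarith
  · intro y hy
    have hy1' : t₀/8 ≤ y := hy.1
    have hy2 : y ≤ t₀/4 := hy.2
    have hy3 : y < 1 := by linarith
    have hy0 : 0 ≤ y := by linarith
    have hpow : (0:ℝ) < (1-y)^2 := pow_pos (by linarith : (0:ℝ) < 1 - y) 2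
    rw [abs_div, abs_of_nonpos (by linarith : s - 1 ≤ 0), abs_of_pos hpow,
      le_div_iff₀ hpow]
    have hsq : (1-y)^2 ≤ 1 := by nlinarith
    nlinarith [mul_le_mul_of_nonneg_left hsq hδm0.le]

lemma psi_bound (t₀ s : ℝ) (h0 : 0 < t₀) (h1 : t₀ < 1) (hs1 : t₀/2 ≤ s) (hs2 : s ≤ (1+t₀)/2)
    {E : Set ℝ} (hEm : MeasurableSet E) :
    volume (Set.Icc (t₀/8) (t₀/4) ∩ (fun y => y/s) ⁻¹' E)
      ≤ volume E / ENNReal.ofReal ((1-t₀)/2) := by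
  have hs0 : 0 < s := by linarith
  have hs1' : s < 1 := by linarith
  have hδm0 : (0:ℝ) < (1-t₀)/2 := by linarith
  refine preimage_meas_bound (fd := fun _ => 1/s)
    (measurable_id.div_const s) measurable_const measurableSet_Icc hEm ?_ ?_ hδm0 ?_
  · intro y hy
    exact ((hasDerivAt_id y).div_const s).hasDerivWithinAt
  · intro y1 _ y2 _ hEq
    have hEq' : y1 / s = y2 / s := hEq
    field_simp [hs0.ne'] at hEq'
    exact hEq'
  · intro y _
    rw [abs_of_pos (by positivity), le_div_iff₀ hs0]
    nlinarith

set_option maxHeartbeats 1000000 in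
/-- For `α > 0`, any Lebesgue-measurable solution `u : [0,1] → ℝ` of the fundamental
functional equation is continuous on `(0,1)`. -/
theorem stmt3 (α : ℝ) (hα : 0 < α) (u : ℝ → ℝ)
    (hmeas : Measurable fun x : Set.Icc (0 : ℝ) 1 => u x)
    (heq : ∀ x y : ℝ, 0 ≤ x → x < 1 → 0 ≤ y → y < 1 → x + y ≤ 1 →
      u (1 - x) + (1 - x) ^ α * u (y / (1 - x))
        = u y + (1 - y) ^ α * u ((1 - x - y) / (1 - y))) :
    ContinuousOn u (Set.Ioo 0 1) := by
  classical
  set w : ℝ → ℝ := fun x => if h : x ∈ Set.Icc (0:ℝ) 1 then u x else 0 with hw_def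
  have hwm : Measurable w := by
    exact Measurable.dite (f := fun x : Set.Icc (0:ℝ) 1 => u x) hmeas measurable_const
      measurableSet_Icc
  have hweq : ∀ x : ℝ, x ∈ Set.Icc (0:ℝ) 1 → w x = u x := fun x hx => dif_pos hx
  have key : ∀ t₀ ∈ Set.Ioo (0:ℝ) 1, ContinuousAt w t₀ := by
    intro t₀ ht₀
    obtain ⟨h0, h1⟩ := ht₀
    -- the functional equation, in terms of `w`
    have hfe : ∀ t y : ℝ, 0 < t → t < 1 → 0 ≤ y → y ≤ t →
        w t = w y + (1-y)^α * w ((t-y)/(1-y)) - t^α * w (y/t) := by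
      intro t y ht0 ht1 hy0 hyt
      have hy1 : y < 1 := lt_of_le_of_lt hyt ht1
      have h := heq (1-t) y (by linarith) (by linarith) hy0 hy1 (by linarith)
      rw [show (1:ℝ) - (1-t) = t by ring] at h
      rw [hweq t ⟨ht0.le, ht1.le⟩, hweq y ⟨hy0, hy1.le⟩,
          hweq (y/t) ⟨div_nonneg hy0 ht0.le, (div_le_one ht0).2 hyt⟩,
          hweq ((t-y)/(1-y)) ⟨div_nonneg (by linarith) (by linarith),
            (div_le_one (by linarith)).2 (by linarith)⟩]
      linarith
    rw [Metric.continuousAt_iff]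
    intro ε hε
    have hη0 : 0 < ε/8 := by positivity
    have hβ0 : (0:ℝ) < (1-t₀)/2 * t₀ / 128 := by
      have : (0:ℝ) < (1-t₀)/2 := by linarith
      positivity
    set I' : Set ℝ := Set.Icc (t₀/8) ((1+t₀)/2) with hI'_def
    -- truncation
    set ST : ℕ → Set ℝ := fun m => {x ∈ I' | (m:ℝ) < |w x|} with hST_def
    have hSTm : ∀ m, MeasurableSet (ST m) := fun m =>
      measurableSet_Icc.inter (measurableSet_lt measurable_const hwm.abs)
    have hSTanti : Antitone ST := by
      intro m n hmn x hx
      exact ⟨hx.1, lt_of_le_of_lt (by exact_mod_cast Nat.cast_le.2 hmn) hx.2⟩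
    have hSTempty : ⋂ m, ST m = ∅ := by
      ext x
      simp only [Set.mem_iInter, Set.mem_empty_iff_false, iff_false, not_forall]
      obtain ⟨m, hm⟩ := exists_nat_gt |w x|
      exact ⟨m, fun hx => absurd hx.2 (not_lt.2 hm.le)⟩
    have hSTfin : volume (ST 0) ≠ ⊤ :=
      ne_of_lt (lt_of_le_of_lt (measure_mono (fun x hx => hx.1)) measure_Icc_lt_top)
    have hSTtend : Filter.Tendsto (volume ∘ ST) Filter.atTop (nhds 0) := by
      have := tendsto_measure_iInter_atTop (μ := volume)
        (fun m => (hSTm m).nullMeasurableSet) hSTanti ⟨0, hSTfin⟩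
      rwa [hSTempty, measure_empty] at this
    obtain ⟨M, hM⟩ : ∃ M : ℕ, volume (ST M) ≤ ENNReal.ofReal ((1-t₀)/2 * t₀ / 128) := by
      have := (hSTtend.eventually_lt_const
        (show (0:ℝ≥0∞) < ENNReal.ofReal ((1-t₀)/2 * t₀ / 128) by simpa using hβ0)).exists
      obtain ⟨M, hM⟩ := this
      exact ⟨M, hM.le⟩
    -- clamped function and its continuous approximation
    set g : ℝ → ℝ := I'.indicator (fun x => max (-(M:ℝ)) (min (M:ℝ) (w x))) with hg_def
    have hgm : Measurable g :=
      (measurable_const.max (measurable_const.min hwm)).indicator measurableSet_Icc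
    have hgi : Integrable g := by
      have hbd : Integrable (I'.indicator (fun _ => (M:ℝ))) := by
        rw [integrable_indicator_iff measurableSet_Icc]
        exact integrableOn_const measure_Icc_lt_top.ne
      refine hbd.mono' hgm.aestronglyMeasurable ?_
      filter_upwards with x
      by_cases hx : x ∈ I'
      · rw [hg_def]
        simp only [Set.indicator_of_mem hx, Real.norm_eq_abs]
        refine abs_le.2 ⟨le_max_left _ _,
          max_le (le_trans (neg_nonpos.2 (Nat.cast_nonneg M)) (Nat.cast_nonneg M))
            (min_le_left _ _)⟩
      · rw [hg_def]
        simp [Set.indicator_of_notMem hx]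
    obtain ⟨v, hv_supp, hv_int, hv_cont, -⟩ :=
      hgi.exists_hasCompactSupport_lintegral_sub_le
        (show ENNReal.ofReal ((1-t₀)/2 * t₀ / 128 * (ε/8)) ≠ 0 by
          simp only [ne_eq, ENNReal.ofReal_eq_zero, not_le]; positivity)
    -- exceptional set
    set E1 : Set ℝ := {x | ε/8 ≤ |g x - v x|} with hE1_def
    have hE1m : MeasurableSet E1 :=
      measurableSet_le measurable_const (hgm.sub hv_cont.measurable).abs
    have hE1v : volume E1 ≤ ENNReal.ofReal ((1-t₀)/2 * t₀ / 128) := by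
      have cheb := meas_ge_le_lintegral_div (μ := volume)
        (f := fun x => (‖g x - v x‖₊ : ℝ≥0∞))
        ((hgm.sub hv_cont.measurable).nnnorm.coe_nnreal_ennreal).aemeasurable
        (ε := ENNReal.ofReal (ε/8))
        (by simp only [ne_eq, ENNReal.ofReal_eq_zero, not_le]; positivity)
        ENNReal.ofReal_ne_top
      calc volume E1 ≤ volume {x | ENNReal.ofReal (ε/8) ≤ (‖g x - v x‖₊ : ℝ≥0∞)} := by
            refine measure_mono (fun x hx => ?_)
            rw [Set.mem_setOf_eq, ← enorm_eq_nnnorm, Real.enorm_eq_ofReal_abs]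
            exact ENNReal.ofReal_le_ofReal hx
        _ ≤ (∫⁻ x, (‖g x - v x‖₊ : ℝ≥0∞)) / ENNReal.ofReal (ε/8) := cheb
        _ ≤ ENNReal.ofReal ((1-t₀)/2 * t₀ / 128 * (ε/8)) / ENNReal.ofReal (ε/8) := by gcongr; exact hv_int
        _ = ENNReal.ofReal ((1-t₀)/2 * t₀ / 128) := by
            rw [ENNReal.ofReal_mul hβ0.le, mul_div_assoc,
              ENNReal.div_self (by simp only [ne_eq, ENNReal.ofReal_eq_zero, not_le]; positivity)
              ENNReal.ofReal_ne_top, mul_one]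
    set E : Set ℝ := E1 ∪ ST M with hE_def
    have hEm : MeasurableSet E := hE1m.union (hSTm M)
    have hEv : volume E ≤ ENNReal.ofReal (2*((1-t₀)/2 * t₀ / 128)) := by
      calc volume E ≤ volume E1 + volume (ST M) := measure_union_le _ _
        _ ≤ ENNReal.ofReal ((1-t₀)/2 * t₀ / 128) + ENNReal.ofReal ((1-t₀)/2 * t₀ / 128) := by
            gcongr
        _ = ENNReal.ofReal (2*((1-t₀)/2 * t₀ / 128)) := by
            rw [← ENNReal.ofReal_add hβ0.le hβ0.le]; ring_nf
    -- good points
    have hgood : ∀ p, p ∈ I' → p ∉ E → |w p - v p| ≤ ε/8 ∧ |w p| ≤ (M:ℝ) := by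
      intro p hp hpE
      have h2 : |w p| ≤ (M:ℝ) := by
        by_contra hcon
        exact hpE (Or.inr ⟨hp, lt_of_not_ge hcon⟩)
      have hgp : g p = w p := by
        rw [hg_def, Set.indicator_of_mem hp]
        obtain ⟨hl, hr⟩ := abs_le.1 h2
        rw [min_eq_right hr, max_eq_right hl]
      have h1' : ¬ (ε/8 ≤ |g p - v p|) := fun hcon => hpE (Or.inl hcon)
      rw [hgp] at h1'
      exact ⟨(not_le.1 h1').le, h2⟩
    -- uniform continuity of v on I'
    obtain ⟨δ₀, hδ₀0, hδ₀⟩ :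
        ∃ δ₀ > 0, ∀ x ∈ I', ∀ y ∈ I', |x - y| < δ₀ → |v x - v y| ≤ ε/8 := by
      have huc := (isCompact_Icc (a := t₀/8)
        (b := (1+t₀)/2)).uniformContinuousOn_of_continuous hv_cont.continuousOn
      rw [Metric.uniformContinuousOn_iff] at huc
      obtain ⟨δ₀, hδ₀0, hδ₀⟩ := huc (ε/8) hη0
      refine ⟨δ₀, hδ₀0, fun x hx y hy hxy => ?_⟩
      have hd := (hδ₀ x hx y hy (by rwa [Real.dist_eq])).le
      rwa [Real.dist_eq] at hd
    -- continuity of rpow at t₀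
    have hrc : ContinuousAt (fun s : ℝ => s ^ α) t₀ :=
      Real.continuousAt_rpow_const t₀ α (Or.inl h0.ne')
    rw [Metric.continuousAt_iff] at hrc
    obtain ⟨δ₁, hδ₁0, hδ₁⟩ := hrc ((ε/8)/(M+1)) (by positivity)
    -- the final δ
    refine ⟨min (min (δ₀/2) (δ₀*t₀)) (min δ₁ (min (t₀/2) ((1-t₀)/2))),
      by have h1t : (0:ℝ) < 1 - t₀ := by linarith
         positivity, ?_⟩
    intro t hdist
    rw [Real.dist_eq] at hdist
    rw [Real.dist_eq]
    simp only [lt_min_iff] at hdist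
    obtain ⟨⟨hd01, hd02⟩, hd11, hd21, hd22⟩ := hdist
    have habs1 := abs_lt.1 hd21
    have habs2 := abs_lt.1 hd22
    have htlow : t₀/2 < t := by linarith [habs1.1]
    have hthi : t < (1+t₀)/2 := by linarith [habs2.2]
    have ht0 : 0 < t := by linarith
    have ht1 : t < 1 := by linarith
    -- the bad set
    set J : Set ℝ := Set.Icc (t₀/8) (t₀/4) with hJ_def
    set B : Set ℝ := ((J ∩ (fun y => (t-y)/(1-y)) ⁻¹' E) ∪ (J ∩ (fun y => (t₀-y)/(1-y)) ⁻¹' E)) ∪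
        ((J ∩ (fun y => y/t) ⁻¹' E) ∪ (J ∩ (fun y => y/t₀) ⁻¹' E)) with hB_def
    have hEδ : volume E / ENNReal.ofReal ((1-t₀)/2) ≤ ENNReal.ofReal (t₀/64) := by
      calc volume E / ENNReal.ofReal ((1-t₀)/2)
          ≤ ENNReal.ofReal (2*((1-t₀)/2 * t₀ / 128)) / ENNReal.ofReal ((1-t₀)/2) := by gcongr
        _ = ENNReal.ofReal (2*((1-t₀)/2 * t₀ / 128)/((1-t₀)/2)) :=
            (ENNReal.ofReal_div_of_pos (by linarith)).symm
        _ = ENNReal.ofReal (t₀/64) := by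
            have hne : ((1:ℝ)-t₀)/2 ≠ 0 := ne_of_gt (by linarith)
            congr 1
            rw [show 2*((1-t₀)/2 * t₀ / 128) = (t₀/64) * ((1-t₀)/2) from by ring,
              mul_div_assoc, div_self hne, mul_one]
    have hBv : volume B < volume J := by
      have hJv : volume J = ENNReal.ofReal (t₀/8) := by
        rw [hJ_def, Real.volume_Icc]
        congr 1
        ring
      have hsum : volume B ≤ ENNReal.ofReal (t₀/64) + ENNReal.ofReal (t₀/64)
          + (ENNReal.ofReal (t₀/64) + ENNReal.ofReal (t₀/64)) := by
        calc volume B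
            ≤ volume ((J ∩ (fun y => (t-y)/(1-y)) ⁻¹' E) ∪ (J ∩ (fun y => (t₀-y)/(1-y)) ⁻¹' E))
              + volume ((J ∩ (fun y => y/t) ⁻¹' E) ∪ (J ∩ (fun y => y/t₀) ⁻¹' E)) :=
            measure_union_le _ _
          _ ≤ (volume (J ∩ (fun y => (t-y)/(1-y)) ⁻¹' E)
                + volume (J ∩ (fun y => (t₀-y)/(1-y)) ⁻¹' E))
              + (volume (J ∩ (fun y => y/t) ⁻¹' E) + volume (J ∩ (fun y => y/t₀) ⁻¹' E)) :=
            add_le_add (measure_union_le _ _) (measure_union_le _ _)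
          _ ≤ _ := by
            refine add_le_add (add_le_add ?_ ?_) (add_le_add ?_ ?_)
            · exact le_trans (phi_bound t₀ t h0 h1 htlow.le hthi.le hEm) hEδ
            · exact le_trans (phi_bound t₀ t₀ h0 h1 (by linarith) (by linarith) hEm) hEδ
            · exact le_trans (psi_bound t₀ t h0 h1 htlow.le hthi.le hEm) hEδ
            · exact le_trans (psi_bound t₀ t₀ h0 h1 (by linarith) (by linarith) hEm) hEδ
      rw [hJv]
      refine lt_of_le_of_lt hsum ?_
      have h5 := ENNReal.ofReal_add (by positivity : (0:ℝ) ≤ t₀/64)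
        (by positivity : (0:ℝ) ≤ t₀/64)
      have h4 := ENNReal.ofReal_add (by positivity : (0:ℝ) ≤ t₀/64 + t₀/64)
        (by positivity : (0:ℝ) ≤ t₀/64 + t₀/64)
      rw [← h5, ← h4]
      exact (ENNReal.ofReal_lt_ofReal_iff (by positivity)).2 (by linarith)
    obtain ⟨y, hyJ, hyB⟩ : (J \ B).Nonempty := by
      rw [Set.nonempty_iff_ne_empty]
      intro hcon
      exact absurd (measure_mono (Set.diff_eq_empty.mp hcon)) (not_le.2 hBv)
    have hyc' : t₀/8 ≤ y := hyJ.1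
    have hyb' : y ≤ t₀/4 := hyJ.2
    have hy0 : 0 ≤ y := by linarith
    have hy1' : y < 1 := by linarith
    -- the four associated points avoid E
    have hne1 : (t-y)/(1-y) ∉ E := fun h => hyB (Or.inl (Or.inl ⟨hyJ, h⟩))
    have hne0 : (t₀-y)/(1-y) ∉ E := fun h => hyB (Or.inl (Or.inr ⟨hyJ, h⟩))
    have hne3 : y/t ∉ E := fun h => hyB (Or.inr (Or.inl ⟨hyJ, h⟩))
    have hne4 : y/t₀ ∉ E := fun h => hyB (Or.inr (Or.inr ⟨hyJ, h⟩))
    -- the four associated points are in I'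
    have hdpos : (0:ℝ) < 1 - y := by linarith
    have hI1 : (t-y)/(1-y) ∈ I' := by
      rw [hI'_def, Set.mem_Icc]
      constructor
      · rw [le_div_iff₀ hdpos]
        linarith [mul_nonneg h0.le hy0]
      · rw [div_le_iff₀ hdpos]
        linarith [mul_nonneg hy0 (by linarith : (0:ℝ) ≤ 1 - t₀)]
    have hI0 : (t₀-y)/(1-y) ∈ I' := by
      rw [hI'_def, Set.mem_Icc]
      constructor
      · rw [le_div_iff₀ hdpos]
        linarith [mul_nonneg h0.le hy0]
      · rw [div_le_iff₀ hdpos]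
        linarith [mul_nonneg hy0 (by linarith : (0:ℝ) ≤ 1 - t₀)]
    have hI3 : y/t ∈ I' := by
      rw [hI'_def, Set.mem_Icc]
      constructor
      · rw [le_div_iff₀ ht0]
        linarith [mul_nonneg h0.le (by linarith : (0:ℝ) ≤ 1 - t)]
      · rw [div_le_iff₀ ht0]
        linarith [mul_nonneg h0.le ht0.le]
    have hI4 : y/t₀ ∈ I' := by
      rw [hI'_def, Set.mem_Icc]
      constructor
      · rw [le_div_iff₀ h0]
        linarith [mul_nonneg h0.le (by linarith : (0:ℝ) ≤ 1 - t₀)]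
      · rw [div_le_iff₀ h0]
        linarith [mul_nonneg h0.le h0.le]
    obtain ⟨e1, m1⟩ := hgood _ hI1 hne1
    obtain ⟨e0, m0⟩ := hgood _ hI0 hne0
    obtain ⟨e3, m3⟩ := hgood _ hI3 hne3
    obtain ⟨e4, m4⟩ := hgood _ hI4 hne4
    -- distances between paired points are small
    have hdφ : |(t-y)/(1-y) - (t₀-y)/(1-y)| < δ₀ := by
      rw [div_sub_div_same, show t - y - (t₀ - y) = t - t₀ from by ring, abs_div,
        abs_of_pos hdpos, div_lt_iff₀ hdpos]
      have hyhalf : δ₀ * y ≤ δ₀ * (1/2) :=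
        mul_le_mul_of_nonneg_left (by linarith) hδ₀0.le
      linarith
    have hdψ : |y/t - y/t₀| < δ₀ := by
      rw [div_sub_div _ _ (ne_of_gt ht0) (ne_of_gt h0), abs_div,
        abs_of_pos (by positivity : (0:ℝ) < t * t₀), div_lt_iff₀ (by positivity : (0:ℝ) < t * t₀),
        show y * t₀ - t * y = y * (t₀ - t) from by ring, abs_mul, abs_of_nonneg hy0,
        abs_sub_comm]
      have k1 : y * |t - t₀| ≤ (t₀/4) * |t - t₀| :=
        mul_le_mul_of_nonneg_right (by linarith) (abs_nonneg _)
      have k2 : (t₀/4) * |t - t₀| < (t₀/4) * (δ₀*t₀) :=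
        mul_lt_mul_of_pos_left hd02 (by linarith)
      have k3 : δ₀*((t₀/2)*t₀) ≤ δ₀*(t*t₀) :=
        mul_le_mul_of_nonneg_left (mul_le_mul_of_nonneg_right htlow.le h0.le) hδ₀0.le
      have k4 : (0:ℝ) ≤ δ₀*((t₀/2)*t₀) := by positivity
      have k5 : (t₀/4)*(δ₀*t₀) = (1/2)*(δ₀*((t₀/2)*t₀)) := by ring
      linarith
    have hv1 := hδ₀ _ hI1 _ hI0 hdφ
    have hv2 := hδ₀ _ hI3 _ hI4 hdψ
    -- rpow differences
    have hrp : |t ^ α - t₀ ^ α| ≤ (ε/8)/(M+1) := by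
      have hh := hδ₁ (show dist t t₀ < δ₁ by rw [Real.dist_eq]; exact hd11)
      rw [Real.dist_eq] at hh
      exact hh.le
    have hA1 : (1-y)^α ≤ 1 := Real.rpow_le_one (by linarith) (by linarith) hα.le
    have hA0 : (0:ℝ) ≤ (1-y)^α := Real.rpow_nonneg (by linarith) α
    have hT1 : t^α ≤ 1 := Real.rpow_le_one ht0.le ht1.le hα.le
    have hT0 : (0:ℝ) ≤ t^α := Real.rpow_nonneg ht0.le α
    -- the two equation instances
    have He1 := hfe t y ht0 ht1 hy0 (by linarith)
    have He0 := hfe t₀ y h0 h1 hy0 (by linarith)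
    have hkey : w t - w t₀ = (1-y)^α * (w ((t-y)/(1-y)) - w ((t₀-y)/(1-y)))
        + t^α * (w (y/t₀) - w (y/t)) + (t₀^α - t^α) * w (y/t₀) := by
      rw [He1, He0]; ring
    -- triangle inequality estimates
    have hP : |w ((t-y)/(1-y)) - w ((t₀-y)/(1-y))| ≤ 3*(ε/8) := by
      have ha := abs_sub_le (w ((t-y)/(1-y))) (v ((t-y)/(1-y))) (w ((t₀-y)/(1-y)))
      have hb' := abs_sub_le (v ((t-y)/(1-y))) (v ((t₀-y)/(1-y))) (w ((t₀-y)/(1-y)))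
      have hc' : |v ((t₀-y)/(1-y)) - w ((t₀-y)/(1-y))| ≤ ε/8 := by
        rw [abs_sub_comm]; exact e0
      linarith
    have hQ : |w (y/t₀) - w (y/t)| ≤ 3*(ε/8) := by
      have ha := abs_sub_le (w (y/t₀)) (v (y/t₀)) (w (y/t))
      have hb' := abs_sub_le (v (y/t₀)) (v (y/t)) (w (y/t))
      have hc' : |v (y/t) - w (y/t)| ≤ ε/8 := by rw [abs_sub_comm]; exact e3
      have hv2' : |v (y/t₀) - v (y/t)| ≤ ε/8 := by rw [abs_sub_comm]; exact hv2
      linarith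
    have habs : |w t - w t₀| ≤ (1-y)^α * |w ((t-y)/(1-y)) - w ((t₀-y)/(1-y))|
        + t^α * |w (y/t₀) - w (y/t)| + |t₀^α - t^α| * |w (y/t₀)| := by
      rw [hkey]
      calc |(1-y)^α * (w ((t-y)/(1-y)) - w ((t₀-y)/(1-y)))
            + t^α * (w (y/t₀) - w (y/t)) + (t₀^α - t^α) * w (y/t₀)|
          ≤ |(1-y)^α * (w ((t-y)/(1-y)) - w ((t₀-y)/(1-y)))
            + t^α * (w (y/t₀) - w (y/t))| + |(t₀^α - t^α) * w (y/t₀)| := abs_add_le _ _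
        _ ≤ |(1-y)^α * (w ((t-y)/(1-y)) - w ((t₀-y)/(1-y)))|
            + |t^α * (w (y/t₀) - w (y/t))| + |(t₀^α - t^α) * w (y/t₀)| := by
            linarith [abs_add_le ((1-y)^α * (w ((t-y)/(1-y)) - w ((t₀-y)/(1-y))))
              (t^α * (w (y/t₀) - w (y/t)))]
        _ = _ := by
            rw [abs_mul, abs_mul, abs_mul, abs_of_nonneg hA0, abs_of_nonneg hT0]
    have c1 : (1-y)^α * |w ((t-y)/(1-y)) - w ((t₀-y)/(1-y))| ≤ 3*(ε/8) :=
      le_trans (mul_le_of_le_one_left (abs_nonneg _) hA1) hP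
    have c2 : t^α * |w (y/t₀) - w (y/t)| ≤ 3*(ε/8) :=
      le_trans (mul_le_of_le_one_left (abs_nonneg _) hT1) hQ
    have c3 : |t₀^α - t^α| * |w (y/t₀)| ≤ ε/8 := by
      calc |t₀^α - t^α| * |w (y/t₀)| ≤ ((ε/8)/(M+1)) * M := by
            refine mul_le_mul ?_ m4 (abs_nonneg _) (by positivity)
            rw [abs_sub_comm]; exact hrp
        _ ≤ ε/8 := by
            rw [div_mul_eq_mul_div, div_le_iff₀ (by positivity : (0:ℝ) < (M:ℝ)+1)]
            have hM0 : (0:ℝ) ≤ (M:ℝ) := Nat.cast_nonneg M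
            nlinarith [hη0.le]
    linarith
  intro t₀ ht₀
  have hev : w =ᶠ[nhds t₀] u := by
    filter_upwards [Ioo_mem_nhds ht₀.1 ht₀.2] with x hx
    exact hweq x ⟨hx.1.le, hx.2.le⟩
  exact ((key t₀ ht₀).congr hev).continuousWithinAt
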